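/- Let A be an associative unital ℚ-algebra and let (J0, Jp, Jm, P) be an osp(1,2)-realization in A. In A ⊗ A ⊗ A, with the intermediate Casimirs Γ_S for subsets S of {1,2,3} as defined in the context, the Bannai–Ito relation {Γ12, Γ23} = Γ13 + 2*Γ2*Γ123 + 2*Γ1*Γ3 holds, where {x,y} = x*y + y*x. -/

import Mathlib

set_option maxHeartbeats 1000000

open scoped TensorProduct

set_option maxHeartbeats 16000000 in
theorem bannai_ito_aux {A : Type*} [Ring A] [Algebra ℚ A]
    (J0 Jp Jm P : A)
    (h1 : J0*Jp - Jp*J0 = Jp)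
    (h2 : J0*Jm - Jm*J0 = -Jm)
    (h3 : Jp*Jm + Jm*Jp = 2*J0)
    (h4 : J0*P = P*J0)
    (h5 : Jp*P + P*Jp = 0)
    (h6 : Jm*P + P*Jm = 0)
    (h7 : P^2 = 1) :
    -- intermediate Casimir operators Γ_S in A ⊗ A ⊗ A for subsets S of {1,2,3}
    let Γ1 : A ⊗[ℚ] (A ⊗[ℚ] A) :=
      (J0 ⊗ₜ[ℚ] ((1:A) ⊗ₜ[ℚ] (1:A))) * (P ⊗ₜ[ℚ] ((1:A) ⊗ₜ[ℚ] (1:A)))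
        - (Jp ⊗ₜ[ℚ] ((1:A) ⊗ₜ[ℚ] (1:A))) * (Jm ⊗ₜ[ℚ] ((1:A) ⊗ₜ[ℚ] (1:A))) * (P ⊗ₜ[ℚ] ((1:A) ⊗ₜ[ℚ] (1:A)))
        - (1/2 : ℚ) • (P ⊗ₜ[ℚ] ((1:A) ⊗ₜ[ℚ] (1:A)))
    let Γ2 : A ⊗[ℚ] (A ⊗[ℚ] A) :=
      ((1:A) ⊗ₜ[ℚ] (J0 ⊗ₜ[ℚ] (1:A))) * ((1:A) ⊗ₜ[ℚ] (P ⊗ₜ[ℚ] (1:A)))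
        - ((1:A) ⊗ₜ[ℚ] (Jp ⊗ₜ[ℚ] (1:A))) * ((1:A) ⊗ₜ[ℚ] (Jm ⊗ₜ[ℚ] (1:A))) * ((1:A) ⊗ₜ[ℚ] (P ⊗ₜ[ℚ] (1:A)))
        - (1/2 : ℚ) • ((1:A) ⊗ₜ[ℚ] (P ⊗ₜ[ℚ] (1:A)))
    let Γ3 : A ⊗[ℚ] (A ⊗[ℚ] A) :=
      ((1:A) ⊗ₜ[ℚ] ((1:A) ⊗ₜ J0)) * ((1:A) ⊗ₜ[ℚ] ((1:A) ⊗ₜ P))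
        - ((1:A) ⊗ₜ[ℚ] ((1:A) ⊗ₜ Jp)) * ((1:A) ⊗ₜ[ℚ] ((1:A) ⊗ₜ Jm)) * ((1:A) ⊗ₜ[ℚ] ((1:A) ⊗ₜ P))
        - (1/2 : ℚ) • ((1:A) ⊗ₜ[ℚ] ((1:A) ⊗ₜ P))
    let Γ12 : A ⊗[ℚ] (A ⊗[ℚ] A) :=
      (J0 ⊗ₜ[ℚ] ((1:A) ⊗ₜ[ℚ] (1:A)) + (1:A) ⊗ₜ[ℚ] (J0 ⊗ₜ[ℚ] (1:A))) * (P ⊗ₜ[ℚ] (P ⊗ₜ[ℚ] (1:A)))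
        - (Jp ⊗ₜ[ℚ] (P ⊗ₜ[ℚ] (1:A)) + (1:A) ⊗ₜ[ℚ] (Jp ⊗ₜ[ℚ] (1:A)))
            * (Jm ⊗ₜ[ℚ] (P ⊗ₜ[ℚ] (1:A)) + (1:A) ⊗ₜ[ℚ] (Jm ⊗ₜ[ℚ] (1:A))) * (P ⊗ₜ[ℚ] (P ⊗ₜ[ℚ] (1:A)))
        - (1/2 : ℚ) • (P ⊗ₜ[ℚ] (P ⊗ₜ[ℚ] (1:A)))
    let Γ13 : A ⊗[ℚ] (A ⊗[ℚ] A) :=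
      (J0 ⊗ₜ[ℚ] ((1:A) ⊗ₜ[ℚ] (1:A)) + (1:A) ⊗ₜ[ℚ] ((1:A) ⊗ₜ J0)) * (P ⊗ₜ[ℚ] ((1:A) ⊗ₜ P))
        - (Jp ⊗ₜ[ℚ] (P ⊗ₜ P) + (1:A) ⊗ₜ[ℚ] ((1:A) ⊗ₜ Jp))
            * (Jm ⊗ₜ[ℚ] (P ⊗ₜ P) + (1:A) ⊗ₜ[ℚ] ((1:A) ⊗ₜ Jm)) * (P ⊗ₜ[ℚ] ((1:A) ⊗ₜ P))
        - (1/2 : ℚ) • (P ⊗ₜ[ℚ] ((1:A) ⊗ₜ P))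
    let Γ23 : A ⊗[ℚ] (A ⊗[ℚ] A) :=
      ((1:A) ⊗ₜ[ℚ] (J0 ⊗ₜ[ℚ] (1:A)) + (1:A) ⊗ₜ[ℚ] ((1:A) ⊗ₜ J0)) * ((1:A) ⊗ₜ[ℚ] (P ⊗ₜ P))
        - ((1:A) ⊗ₜ[ℚ] (Jp ⊗ₜ P) + (1:A) ⊗ₜ[ℚ] ((1:A) ⊗ₜ Jp))
            * ((1:A) ⊗ₜ[ℚ] (Jm ⊗ₜ P) + (1:A) ⊗ₜ[ℚ] ((1:A) ⊗ₜ Jm)) * ((1:A) ⊗ₜ[ℚ] (P ⊗ₜ P))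
        - (1/2 : ℚ) • ((1:A) ⊗ₜ[ℚ] (P ⊗ₜ P))
    let Γ123 : A ⊗[ℚ] (A ⊗[ℚ] A) :=
      (J0 ⊗ₜ[ℚ] ((1:A) ⊗ₜ[ℚ] (1:A)) + (1:A) ⊗ₜ[ℚ] (J0 ⊗ₜ[ℚ] (1:A)) + (1:A) ⊗ₜ[ℚ] ((1:A) ⊗ₜ J0))
          * (P ⊗ₜ[ℚ] (P ⊗ₜ P))
        - (Jp ⊗ₜ[ℚ] (P ⊗ₜ P) + (1:A) ⊗ₜ[ℚ] (Jp ⊗ₜ P) + (1:A) ⊗ₜ[ℚ] ((1:A) ⊗ₜ Jp))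
            * (Jm ⊗ₜ[ℚ] (P ⊗ₜ P) + (1:A) ⊗ₜ[ℚ] (Jm ⊗ₜ P) + (1:A) ⊗ₜ[ℚ] ((1:A) ⊗ₜ Jm))
            * (P ⊗ₜ[ℚ] (P ⊗ₜ P))
        - (1/2 : ℚ) • (P ⊗ₜ[ℚ] (P ⊗ₜ P))
    Γ12*Γ23 + Γ23*Γ12 = Γ13 + 2*Γ2*Γ123 + 2*Γ1*Γ3 := by
  intro Γ1 Γ2 Γ3 Γ12 Γ13 Γ23 Γ123
  rw [two_mul Γ2, two_mul Γ1]
  have hP : P*P = 1 := by rw [← sq]; exact h7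
  have hPJp : P*Jp = -(Jp*P) := eq_neg_of_add_eq_zero_right h5
  have hPJm : P*Jm = -(Jm*P) := eq_neg_of_add_eq_zero_right h6
  have hPJ0 : P*J0 = J0*P := h4.symm
  have hJmJp : Jm*Jp = (2:ℚ)•J0 - Jp*Jm := by
    have h := eq_sub_of_add_eq' h3
    rw [h]; congr 1; rw [Algebra.smul_def, map_ofNat]
  have hJ0Jp : J0*Jp = Jp + Jp*J0 := sub_eq_iff_eq_add.mp h1
  have hJ0Jm : J0*Jm = -Jm + Jm*J0 := sub_eq_iff_eq_add.mp h2
  have HP : ∀ x : A, P*(P*x) = x := fun x => by rw [← mul_assoc, hP, one_mul]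
  have HPJp : ∀ x : A, P*(Jp*x) = -(Jp*(P*x)) := fun x => by
    rw [← mul_assoc, hPJp, neg_mul, mul_assoc]
  have HPJm : ∀ x : A, P*(Jm*x) = -(Jm*(P*x)) := fun x => by
    rw [← mul_assoc, hPJm, neg_mul, mul_assoc]
  have HPJ0 : ∀ x : A, P*(J0*x) = J0*(P*x) := fun x => by
    rw [← mul_assoc, hPJ0, mul_assoc]
  have HJmJp : ∀ x : A, Jm*(Jp*x) = (2:ℚ)•(J0*x) - Jp*(Jm*x) := fun x => by
    rw [← mul_assoc, hJmJp, sub_mul, smul_mul_assoc, mul_assoc]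
  have HJ0Jp : ∀ x : A, J0*(Jp*x) = Jp*x + Jp*(J0*x) := fun x => by
    rw [← mul_assoc, hJ0Jp, add_mul, mul_assoc]
  have HJ0Jm : ∀ x : A, J0*(Jm*x) = -(Jm*x) + Jm*(J0*x) := fun x => by
    rw [← mul_assoc, hJ0Jm, add_mul, neg_mul, mul_assoc]
  have Tmul_add : ∀ x y z : A ⊗[ℚ] (A ⊗[ℚ] A), x*(y+z) = x*y + x*z := fun x y z => mul_add x y z
  have Tadd_mul : ∀ x y z : A ⊗[ℚ] (A ⊗[ℚ] A), (x+y)*z = x*z + y*z := fun x y z => add_mul x y z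
  have Tneg_mul : ∀ x y : A ⊗[ℚ] (A ⊗[ℚ] A), (-x)*y = -(x*y) := fun x y => neg_mul x y
  have Tmul_neg : ∀ x y : A ⊗[ℚ] (A ⊗[ℚ] A), x*(-y) = -(x*y) := fun x y => mul_neg x y
  have Tsub_mul : ∀ x y z : A ⊗[ℚ] (A ⊗[ℚ] A), (x-y)*z = x*z - y*z := fun x y z => sub_mul x y z
  have Tmul_sub : ∀ x y z : A ⊗[ℚ] (A ⊗[ℚ] A), x*(y-z) = x*y - x*z := fun x y z => mul_sub x y z
  have Tsmul_mul : ∀ (r : ℚ) (x y : A ⊗[ℚ] (A ⊗[ℚ] A)), (r•x)*y = r•(x*y) := fun r x y => smul_mul_assoc r x y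
  have Tmul_smul : ∀ (r : ℚ) (x y : A ⊗[ℚ] (A ⊗[ℚ] A)), x*(r•y) = r•(x*y) := fun r x y => mul_smul_comm r x y
  have Tassoc : ∀ x y z : A ⊗[ℚ] (A ⊗[ℚ] A), x*y*z = x*(y*z) := fun x y z => mul_assoc x y z
  have Tso1 : ∀ (r : ℚ) (a : A) (b : A ⊗[ℚ] A), (r•a) ⊗ₜ[ℚ] b = r•(a ⊗ₜ[ℚ] b) :=
    fun r a b => (TensorProduct.smul_tmul' r a b).symm
  have Tso2 : ∀ (r : ℚ) (a : A) (b : A ⊗[ℚ] A), a ⊗ₜ[ℚ] (r•b) = r•(a ⊗ₜ[ℚ] b) :=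
    fun r a b => TensorProduct.tmul_smul r a b
  have Tso3 : ∀ (r : ℚ) (a b : A), (r•a) ⊗ₜ[ℚ] b = r•(a ⊗ₜ[ℚ] b) :=
    fun r a b => (TensorProduct.smul_tmul' r a b).symm
  have Tso4 : ∀ (r : ℚ) (a b : A), a ⊗ₜ[ℚ] (r•b) = r•(a ⊗ₜ[ℚ] b) :=
    fun r a b => TensorProduct.tmul_smul r a b
  simp only [Γ1, Γ2, Γ3, Γ12, Γ13, Γ23, Γ123,
    Algebra.TensorProduct.tmul_mul_tmul,
    Tmul_add, Tadd_mul, Tsub_mul, Tmul_sub, Tmul_neg, Tneg_mul,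
    Tsmul_mul, Tmul_smul, Tassoc,
    mul_add, add_mul, sub_mul, mul_sub, mul_neg, neg_mul,
    smul_mul_assoc, mul_smul_comm, mul_assoc, one_mul, mul_one,
    HP, HPJp, HPJm, HPJ0, HJmJp, HJ0Jp, HJ0Jm,
    hP, hPJp, hPJm, hPJ0, hJmJp, hJ0Jp, hJ0Jm,
    TensorProduct.tmul_add, TensorProduct.add_tmul,
    TensorProduct.tmul_sub, TensorProduct.sub_tmul,
    TensorProduct.tmul_neg, TensorProduct.neg_tmul,
    Tso1, Tso2, Tso3, Tso4,
    smul_add, smul_sub, smul_neg, smul_smul,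
    neg_add, neg_sub, neg_neg, sub_eq_add_neg]
  module

/-- Bannai–Ito relation: {Γ12, Γ23} = Γ13 + 2*Γ2*Γ123 + 2*Γ1*Γ3 in A ⊗ A ⊗ A. -/
theorem bannai_ito_relation_12_23 {A : Type*} [Ring A] [Algebra ℚ A]
    (J0 Jp Jm P : A)
    (h1 : J0*Jp - Jp*J0 = Jp)
    (h2 : J0*Jm - Jm*J0 = -Jm)
    (h3 : Jp*Jm + Jm*Jp = 2*J0)
    (h4 : J0*P = P*J0)
    (h5 : Jp*P + P*Jp = 0)
    (h6 : Jm*P + P*Jm = 0)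
    (h7 : P^2 = 1) :
    -- intermediate Casimir operators Γ_S in A ⊗ A ⊗ A for subsets S of {1,2,3}
    let Γ1 : A ⊗[ℚ] (A ⊗[ℚ] A) :=
      (J0 ⊗ₜ[ℚ] ((1:A) ⊗ₜ[ℚ] (1:A))) * (P ⊗ₜ[ℚ] ((1:A) ⊗ₜ[ℚ] (1:A)))
        - (Jp ⊗ₜ[ℚ] ((1:A) ⊗ₜ[ℚ] (1:A))) * (Jm ⊗ₜ[ℚ] ((1:A) ⊗ₜ[ℚ] (1:A))) * (P ⊗ₜ[ℚ] ((1:A) ⊗ₜ[ℚ] (1:A)))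
        - (1/2 : ℚ) • (P ⊗ₜ[ℚ] ((1:A) ⊗ₜ[ℚ] (1:A)))
    let Γ2 : A ⊗[ℚ] (A ⊗[ℚ] A) :=
      ((1:A) ⊗ₜ[ℚ] (J0 ⊗ₜ[ℚ] (1:A))) * ((1:A) ⊗ₜ[ℚ] (P ⊗ₜ[ℚ] (1:A)))
        - ((1:A) ⊗ₜ[ℚ] (Jp ⊗ₜ[ℚ] (1:A))) * ((1:A) ⊗ₜ[ℚ] (Jm ⊗ₜ[ℚ] (1:A))) * ((1:A) ⊗ₜ[ℚ] (P ⊗ₜ[ℚ] (1:A)))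
        - (1/2 : ℚ) • ((1:A) ⊗ₜ[ℚ] (P ⊗ₜ[ℚ] (1:A)))
    let Γ3 : A ⊗[ℚ] (A ⊗[ℚ] A) :=
      ((1:A) ⊗ₜ[ℚ] ((1:A) ⊗ₜ J0)) * ((1:A) ⊗ₜ[ℚ] ((1:A) ⊗ₜ P))
        - ((1:A) ⊗ₜ[ℚ] ((1:A) ⊗ₜ Jp)) * ((1:A) ⊗ₜ[ℚ] ((1:A) ⊗ₜ Jm)) * ((1:A) ⊗ₜ[ℚ] ((1:A) ⊗ₜ P))
        - (1/2 : ℚ) • ((1:A) ⊗ₜ[ℚ] ((1:A) ⊗ₜ P))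
    let Γ12 : A ⊗[ℚ] (A ⊗[ℚ] A) :=
      (J0 ⊗ₜ[ℚ] ((1:A) ⊗ₜ[ℚ] (1:A)) + (1:A) ⊗ₜ[ℚ] (J0 ⊗ₜ[ℚ] (1:A))) * (P ⊗ₜ[ℚ] (P ⊗ₜ[ℚ] (1:A)))
        - (Jp ⊗ₜ[ℚ] (P ⊗ₜ[ℚ] (1:A)) + (1:A) ⊗ₜ[ℚ] (Jp ⊗ₜ[ℚ] (1:A)))
            * (Jm ⊗ₜ[ℚ] (P ⊗ₜ[ℚ] (1:A)) + (1:A) ⊗ₜ[ℚ] (Jm ⊗ₜ[ℚ] (1:A))) * (P ⊗ₜ[ℚ] (P ⊗ₜ[ℚ] (1:A)))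
        - (1/2 : ℚ) • (P ⊗ₜ[ℚ] (P ⊗ₜ[ℚ] (1:A)))
    let Γ13 : A ⊗[ℚ] (A ⊗[ℚ] A) :=
      (J0 ⊗ₜ[ℚ] ((1:A) ⊗ₜ[ℚ] (1:A)) + (1:A) ⊗ₜ[ℚ] ((1:A) ⊗ₜ J0)) * (P ⊗ₜ[ℚ] ((1:A) ⊗ₜ P))
        - (Jp ⊗ₜ[ℚ] (P ⊗ₜ P) + (1:A) ⊗ₜ[ℚ] ((1:A) ⊗ₜ Jp))
            * (Jm ⊗ₜ[ℚ] (P ⊗ₜ P) + (1:A) ⊗ₜ[ℚ] ((1:A) ⊗ₜ Jm)) * (P ⊗ₜ[ℚ] ((1:A) ⊗ₜ P))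
        - (1/2 : ℚ) • (P ⊗ₜ[ℚ] ((1:A) ⊗ₜ P))
    let Γ23 : A ⊗[ℚ] (A ⊗[ℚ] A) :=
      ((1:A) ⊗ₜ[ℚ] (J0 ⊗ₜ[ℚ] (1:A)) + (1:A) ⊗ₜ[ℚ] ((1:A) ⊗ₜ J0)) * ((1:A) ⊗ₜ[ℚ] (P ⊗ₜ P))
        - ((1:A) ⊗ₜ[ℚ] (Jp ⊗ₜ P) + (1:A) ⊗ₜ[ℚ] ((1:A) ⊗ₜ Jp))
            * ((1:A) ⊗ₜ[ℚ] (Jm ⊗ₜ P) + (1:A) ⊗ₜ[ℚ] ((1:A) ⊗ₜ Jm)) * ((1:A) ⊗ₜ[ℚ] (P ⊗ₜ P))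
        - (1/2 : ℚ) • ((1:A) ⊗ₜ[ℚ] (P ⊗ₜ P))
    let Γ123 : A ⊗[ℚ] (A ⊗[ℚ] A) :=
      (J0 ⊗ₜ[ℚ] ((1:A) ⊗ₜ[ℚ] (1:A)) + (1:A) ⊗ₜ[ℚ] (J0 ⊗ₜ[ℚ] (1:A)) + (1:A) ⊗ₜ[ℚ] ((1:A) ⊗ₜ J0))
          * (P ⊗ₜ[ℚ] (P ⊗ₜ P))
        - (Jp ⊗ₜ[ℚ] (P ⊗ₜ P) + (1:A) ⊗ₜ[ℚ] (Jp ⊗ₜ P) + (1:A) ⊗ₜ[ℚ] ((1:A) ⊗ₜ Jp))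
            * (Jm ⊗ₜ[ℚ] (P ⊗ₜ P) + (1:A) ⊗ₜ[ℚ] (Jm ⊗ₜ P) + (1:A) ⊗ₜ[ℚ] ((1:A) ⊗ₜ Jm))
            * (P ⊗ₜ[ℚ] (P ⊗ₜ P))
        - (1/2 : ℚ) • (P ⊗ₜ[ℚ] (P ⊗ₜ P))
    Γ12*Γ23 + Γ23*Γ12 = Γ13 + 2*Γ2*Γ123 + 2*Γ1*Γ3 := bannai_ito_aux J0 Jp Jm P h1 h2 h3 h4 h5 h6 h7
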